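/- Let $\theta_1, \theta_2 \in [0, 2\pi)$, $\sigma_1, \sigma_2 > 0$, and let $\mathcal{M}_j$ be Type II invariant subspaces of $B_{\sigma_j, e^{i\theta_j}}$ on $H^2(\mathbb{T}) \oplus \mathbb{C}$ with canonical representations $\mathcal{M}_j = \mathbb{C}(g_j, 1) \oplus (\varphi_j H^2(\mathbb{T}) \oplus \{0\})$, where $g_j = \sigma_j(\overline{\varphi_j(e^{i\theta_j})}\varphi_j - 1)/(z - e^{i\theta_j})$. If there is a unitary $U : \mathcal{M}_1 \to \mathcal{M}_2$ with $U B_{\sigma_1, e^{i\theta_1}}|_{\mathcal{M}_1} = B_{\sigma_2, e^{i\theta_2}}|_{\mathcal{M}_2} U$, then $\theta_1 = \theta_2$ and $\sigma_2^2(1 + \|g_1\|^2) = \sigma_1^2(1 + \|g_2\|^2)$. -/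

import Mathlib

open Complex

noncomputable section
set_option linter.unusedSectionVars false

/-- The `E`-valued Hardy space `H²_E(𝕋)`, modeled by the ℓ² space of its
Taylor/Fourier coefficient sequences. -/
abbrev Hardy (E : Type*) [NormedAddCommGroup E] [InnerProductSpace ℂ E] [CompleteSpace E] :=
  lp (fun _ : ℕ => E) 2

variable {E : Type*} [NormedAddCommGroup E] [InnerProductSpace ℂ E] [CompleteSpace E]

def shiftSeq (f : ℕ → E) : ℕ → E
  | 0 => 0
  | n + 1 => f n

lemma memℓp_shiftSeq {f : ℕ → E} (hf : Memℓp f 2) : Memℓp (shiftSeq f) 2 := by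
  have h := hf.summable (by norm_num)
  exact memℓp_gen ((summable_nat_add_iff 1).mp (by simpa [shiftSeq] using h))

/-- The shift `S_E : f ↦ z f` on `H²_E(𝕋)`. -/
def shiftOp (f : Hardy E) : Hardy E := ⟨shiftSeq f, memℓp_shiftSeq (lp.memℓp f)⟩

/-- The inclusion `i_E : E → H²_E(𝕋)` sending `x` to the constant function `x`. -/
def inclOp (y : E) : Hardy E := lp.single 2 (0 : ℕ) y

/-- The Brownian shift `B^E_{σ, e^{iθ}}` of covariance `σ` and angle `θ` on
`H²_E(𝕋) ⊕ E`: `(f, y) ↦ (zf + σ y, e^{iθ} y)`. -/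
def BS (σ θ : ℝ) (v : Hardy E × E) : Hardy E × E :=
  (shiftOp v.1 + (σ : ℂ) • inclOp v.2, Complex.exp (θ * I) • v.2)

/-- The Hilbert space direct sum `H²_E(𝕋) ⊕ E` (with the ℓ²-norm on the pair). -/
abbrev HardyPair (E : Type*) [NormedAddCommGroup E] [InnerProductSpace ℂ E] [CompleteSpace E] :=
  WithLp 2 (Hardy E × E)

/-- Build an element of `H²_E(𝕋) ⊕ E` from its two components. -/
def mkPair (f : Hardy E) (y : E) : HardyPair E := (WithLp.equiv 2 (Hardy E × E)).symm (f, y)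

/-- First component of an element of `H²_E(𝕋) ⊕ E`. -/
def pr1 (v : HardyPair E) : Hardy E := (WithLp.equiv 2 (Hardy E × E) v).1

/-- Second component of an element of `H²_E(𝕋) ⊕ E`. -/
def pr2 (v : HardyPair E) : E := (WithLp.equiv 2 (Hardy E × E) v).2

/-- The Brownian shift `B^E_{σ, e^{iθ}}` on the Hilbert space `H²_E(𝕋) ⊕ E`:
`(f, y) ↦ (zf + σy, e^{iθ} y)`. -/
def BW (σ θ : ℝ) (v : HardyPair E) : HardyPair E :=
  mkPair (shiftOp (pr1 v) + (σ : ℂ) • inclOp (pr2 v)) (Complex.exp (θ * I) • pr2 v)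

/-- Embedding `h ↦ (Φh, 0)` of `H²(𝕋)` into `H²(𝕋) ⊕ ℂ`. -/
def rangeEmb (T : Hardy ℂ →L[ℂ] Hardy ℂ) : Hardy ℂ →ₗ[ℂ] HardyPair ℂ :=
  ((WithLp.linearEquiv 2 ℂ (Hardy ℂ × ℂ)).symm.toLinearMap).comp
    (LinearMap.prod T.toLinearMap (0 : Hardy ℂ →ₗ[ℂ] ℂ))


section Aux

open scoped ENNReal

local notation "⟪" x ", " y "⟫" => inner (𝕜 := ℂ) x y

lemma shiftOp_coe (f : Hardy ℂ) : ⇑(shiftOp f) = shiftSeq ⇑f := rfl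

lemma shiftOp_add (f g : Hardy ℂ) : shiftOp (f + g) = shiftOp f + shiftOp g := by
  apply lp.ext
  rw [lp.coeFn_add, shiftOp_coe, shiftOp_coe, shiftOp_coe, lp.coeFn_add]
  funext n
  cases n with
  | zero => simp [shiftSeq]
  | succ n => simp [shiftSeq]

lemma shiftOp_smul (c : ℂ) (f : Hardy ℂ) : shiftOp (c • f) = c • shiftOp f := by
  apply lp.ext
  rw [lp.coeFn_smul, shiftOp_coe, shiftOp_coe, lp.coeFn_smul]
  funext n
  cases n with
  | zero => simp [shiftSeq]
  | succ n => simp [shiftSeq]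

lemma shiftOp_zero : shiftOp (0 : Hardy ℂ) = 0 := by
  apply lp.ext
  rw [shiftOp_coe, lp.coeFn_zero]
  funext n
  cases n with
  | zero => simp [shiftSeq]
  | succ n => simp [shiftSeq]

lemma shiftOp_single (n : ℕ) (c : ℂ) :
    shiftOp (lp.single 2 n c) = lp.single 2 (n + 1) c := by
  apply lp.ext
  funext m
  rw [shiftOp_coe]
  cases m with
  | zero =>
      show (0 : ℂ) = (lp.single 2 (n+1) c : Hardy ℂ) 0
      rw [lp.single_apply, Pi.single_apply, if_neg (by omega : (0:ℕ) ≠ n+1)]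
  | succ m =>
      show (lp.single 2 n c : Hardy ℂ) m = (lp.single 2 (n+1) c : Hardy ℂ) (m+1)
      rw [lp.single_apply, lp.single_apply]
      by_cases h : m = n
      · subst h; rw [Pi.single_eq_same, Pi.single_eq_same]
      · rw [Pi.single_apply, Pi.single_apply, if_neg h, if_neg (by omega : m+1 ≠ n+1)]

lemma inclOp_eq (c : ℂ) : (inclOp c : Hardy ℂ) = c • inclOp 1 := by
  rw [inclOp, inclOp, ← lp.single_smul, smul_eq_mul, mul_one]

lemma mkPair_add (f f' : Hardy ℂ) (y y' : ℂ) :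
    mkPair f y + mkPair f' y' = mkPair (f + f') (y + y') := rfl

lemma mkPair_smul (c : ℂ) (f : Hardy ℂ) (y : ℂ) :
    c • mkPair f y = mkPair (c • f) (c • y) := rfl

lemma rangeEmb_eq (T : Hardy ℂ →L[ℂ] Hardy ℂ) (h : Hardy ℂ) :
    rangeEmb T h = mkPair (T h) 0 := rfl

lemma pr1_mkPair (f : Hardy ℂ) (y : ℂ) : pr1 (mkPair f y) = f := rfl
lemma pr2_mkPair (f : Hardy ℂ) (y : ℂ) : pr2 (mkPair f y) = y := rfl

lemma BW_mkPair (σ θ : ℝ) (f : Hardy ℂ) (y : ℂ) :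
    BW σ θ (mkPair f y)
      = mkPair (shiftOp f + (σ : ℂ) • inclOp y) (Complex.exp (θ * I) • y) := rfl

lemma inner_mkPair (f f' : Hardy ℂ) (y y' : ℂ) :
    ⟪mkPair f y, mkPair f' y'⟫ = ⟪f, f'⟫ + ⟪y, y'⟫ :=
  WithLp.prod_inner_apply _ _

lemma norm_mkPair_sq (f : Hardy ℂ) (y : ℂ) : ‖mkPair f y‖ ^ 2 = ‖f‖ ^ 2 + ‖y‖ ^ 2 :=
  WithLp.prod_norm_sq_eq_of_L2 _

lemma norm_inclOp_one : ‖(inclOp 1 : Hardy ℂ)‖ = 1 := by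
  have := lp.norm_single (E := fun _ : ℕ => ℂ) (p := 2) (by norm_num) 0 (1:ℂ)
  simpa [inclOp] using this


/-- The main structural computation: `BW` on an element of the canonical decomposition. -/
lemma BW_decomp (σ θ : ℝ) (w : ℂ) (T : Hardy ℂ →L[ℂ] Hardy ℂ)
    (hTcomm : ∀ h : Hardy ℂ, T (shiftOp h) = shiftOp (T h))
    (g : Hardy ℂ)
    (hg : shiftOp g + (σ : ℂ) • inclOp 1 =
      Complex.exp (θ * I) • g + ((σ : ℂ) * (starRingEnd ℂ) w) • T (inclOp 1))
    (c : ℂ) (h : Hardy ℂ) :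
    BW σ θ (c • mkPair g 1 + rangeEmb T h)
      = (c * Complex.exp (θ * I)) • mkPair g 1
        + rangeEmb T ((c * σ * (starRingEnd ℂ) w) • inclOp 1 + shiftOp h) := by
  have e1 : c • mkPair g 1 + rangeEmb T h = mkPair (c • g + T h) c := by
    rw [mkPair_smul, rangeEmb_eq, mkPair_add, add_zero, smul_eq_mul, mul_one]
  rw [e1, BW_mkPair, rangeEmb_eq, mkPair_smul, mkPair_add]
  congr 1
  · rw [inclOp_eq c, shiftOp_add, ← hTcomm, smul_comm ((σ:ℂ)) c, shiftOp_smul]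
    rw [show c • shiftOp g + T (shiftOp h) + c • ((σ:ℂ) • inclOp 1)
          = c • (shiftOp g + (σ:ℂ) • inclOp 1) + T (shiftOp h) by
        rw [smul_add]; ring_nf; abel]
    rw [hg, smul_add, smul_smul, smul_smul, map_add, map_smul]
    rw [show c * (↑σ * (starRingEnd ℂ) w) = c * ↑σ * (starRingEnd ℂ) w by ring]
    abel
  · simp [smul_eq_mul]; ring

/-- An ℓ² sequence satisfying `f (n+1) = conj λ * f n` with `‖λ‖ = 1` vanishes. -/
lemma eventually_zero (f : Hardy ℂ) (lam : ℂ) (hlam : ‖lam‖ = 1)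
    (hrec : ∀ n : ℕ, f (n + 1) = (starRingEnd ℂ) lam * f n) : f = 0 := by
  have hconst : ∀ n : ℕ, ‖f n‖ = ‖f 0‖ := by
    intro n; induction n with
    | zero => rfl
    | succ n ih => rw [hrec n, norm_mul, RCLike.norm_conj, hlam, one_mul, ih]
  have hsum : Summable fun n : ℕ => ‖f n‖ ^ (2 : ℝ≥0∞).toReal :=
    (lp.memℓp f).summable (by norm_num)
  have h2 : (2 : ℝ≥0∞).toReal = 2 := by norm_num
  have hz : ‖f 0‖ = 0 := by
    by_contra hne
    have hpos : 0 < ‖f 0‖ ^ (2 : ℝ≥0∞).toReal := by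
      rw [h2]
      exact Real.rpow_pos_of_pos (lt_of_le_of_ne (norm_nonneg _) (Ne.symm hne)) 2
    have htend := hsum.tendsto_atTop_zero
    have : Filter.Tendsto (fun _ : ℕ => ‖f 0‖ ^ (2 : ℝ≥0∞).toReal)
        Filter.atTop (nhds 0) := by
      refine htend.congr fun n => ?_
      rw [hconst n]
    have := tendsto_nhds_unique this tendsto_const_nhds
    exact absurd this (ne_of_gt hpos).symm
  have hzero : ∀ n : ℕ, f n = 0 := by
    intro n; induction n with
    | zero => exact norm_eq_zero.mp hz
    | succ n ih => rw [hrec n, ih, mul_zero]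
  exact lp.ext (funext hzero)

end Aux

section AuxMain

open scoped ENNReal

local notation "⟪" x ", " y "⟫" => inner (𝕜 := ℂ) x y

set_option maxHeartbeats 2000000
set_option synthInstance.maxHeartbeats 400000

/-- Necessity part of the scalar unitary-equivalence theorem for Type II invariant
subspaces: if the restrictions of `B_{σ₁,e^{iθ₁}}` and `B_{σ₂,e^{iθ₂}}` to the canonical
Type II invariant subspaces `M_j = ℂ(g_j,1) ⊕ (φ_j H² ⊕ {0})`, with
`g_j = σ_j(conj(φ_j(e^{iθ_j}))φ_j - 1)/(z - e^{iθ_j})`, are unitarily equivalent, then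
`θ₁ = θ₂` and `σ₂²(1 + ‖g₁‖²) = σ₁²(1 + ‖g₂‖²)`. -/
theorem typeII_unitary_equivalence_necessity
    (σ₁ σ₂ θ₁ θ₂ : ℝ) (hσ₁ : 0 < σ₁) (hσ₂ : 0 < σ₂)
    (hθ₁ : θ₁ ∈ Set.Ico 0 (2 * Real.pi)) (hθ₂ : θ₂ ∈ Set.Ico 0 (2 * Real.pi))
    (T₁ T₂ : Hardy ℂ →L[ℂ] Hardy ℂ)
    (hT₁iso : ∀ h : Hardy ℂ, ‖T₁ h‖ = ‖h‖) (hT₂iso : ∀ h : Hardy ℂ, ‖T₂ h‖ = ‖h‖)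
    (hT₁comm : ∀ h : Hardy ℂ, T₁ (shiftOp h) = shiftOp (T₁ h))
    (hT₂comm : ∀ h : Hardy ℂ, T₂ (shiftOp h) = shiftOp (T₂ h))
    -- the radial limit values `w_j = φ_j(e^{iθ_j})`, of modulus one
    (w₁ w₂ : ℂ) (hw₁ : ‖w₁‖ = 1) (hw₂ : ‖w₂‖ = 1)
    (g₁ g₂ : Hardy ℂ)
    -- `z g_j + σ_j = e^{iθ_j} g_j + σ_j conj(w_j) φ_j`
    (hg₁ : shiftOp g₁ + (σ₁ : ℂ) • inclOp 1 =
      Complex.exp (θ₁ * I) • g₁ + ((σ₁ : ℂ) * (starRingEnd ℂ) w₁) • T₁ (inclOp 1))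
    (hg₂ : shiftOp g₂ + (σ₂ : ℂ) • inclOp 1 =
      Complex.exp (θ₂ * I) • g₂ + ((σ₂ : ℂ) * (starRingEnd ℂ) w₂) • T₂ (inclOp 1))
    -- `g_j` lies in the model space `𝒦_{φ_j}`
    (hK₁ : ∀ h : Hardy ℂ, inner (𝕜 := ℂ) (T₁ h) g₁ = 0)
    (hK₂ : ∀ h : Hardy ℂ, inner (𝕜 := ℂ) (T₂ h) g₂ = 0)
    (M₁ M₂ : Submodule ℂ (HardyPair ℂ))
    (hM₁ : M₁ = Submodule.span ℂ {mkPair g₁ 1} ⊔ LinearMap.range (rangeEmb T₁))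
    (hM₂ : M₂ = Submodule.span ℂ {mkPair g₂ 1} ⊔ LinearMap.range (rangeEmb T₂))
    (hinv₁ : ∀ v ∈ M₁, BW σ₁ θ₁ v ∈ M₁) (hinv₂ : ∀ v ∈ M₂, BW σ₂ θ₂ v ∈ M₂)
    (U : M₁ ≃ₗᵢ[ℂ] M₂)
    (hU : ∀ (v : HardyPair ℂ) (hv : v ∈ M₁),
      ((U ⟨BW σ₁ θ₁ v, hinv₁ v hv⟩ : M₂) : HardyPair ℂ) =
        BW σ₂ θ₂ ((U ⟨v, hv⟩ : M₂) : HardyPair ℂ)) :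
    θ₁ = θ₂ ∧ σ₂ ^ 2 * (1 + ‖g₁‖ ^ 2) = σ₁ ^ 2 * (1 + ‖g₂‖ ^ 2) := by
  classical
  set lam₁ := Complex.exp (θ₁ * I) with hlam₁
  set lam₂ := Complex.exp (θ₂ * I) with hlam₂
  have hlam₁norm : ‖lam₁‖ = 1 := by
    rw [hlam₁]; exact Complex.norm_exp_ofReal_mul_I θ₁
  -- isometry facts for T₂
  have hTinner : ∀ k f : Hardy ℂ, ⟪T₂ k, T₂ f⟫ = ⟪k, f⟫ := by
    intro k f
    exact LinearIsometry.inner_map_map ⟨T₂.toLinearMap, hT₂iso⟩ k f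
  -- memberships
  have memM₁ : ∀ (c : ℂ) (h : Hardy ℂ), c • mkPair g₁ 1 + rangeEmb T₁ h ∈ M₁ := by
    intro c h
    rw [hM₁]
    exact Submodule.add_mem _
      (Submodule.mem_sup_left (Submodule.smul_mem _ _ (Submodule.mem_span_singleton_self _)))
      (Submodule.mem_sup_right (LinearMap.mem_range_self _ h))
  have memM₂ : ∀ (c : ℂ) (h : Hardy ℂ), c • mkPair g₂ 1 + rangeEmb T₂ h ∈ M₂ := by
    intro c h
    rw [hM₂]
    exact Submodule.add_mem _
      (Submodule.mem_sup_left (Submodule.smul_mem _ _ (Submodule.mem_span_singleton_self _)))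
      (Submodule.mem_sup_right (LinearMap.mem_range_self _ h))
  have memg₁ : mkPair g₁ 1 ∈ M₁ := by simpa using memM₁ 1 0
  have decompM₁ : ∀ v ∈ M₁, ∃ (c : ℂ) (h : Hardy ℂ), v = c • mkPair g₁ 1 + rangeEmb T₁ h := by
    intro v hv
    rw [hM₁] at hv
    obtain ⟨y, hy, z, hz, rfl⟩ := Submodule.mem_sup.mp hv
    obtain ⟨c, rfl⟩ := Submodule.mem_span_singleton.mp hy
    obtain ⟨h, rfl⟩ := hz
    exact ⟨c, h, rfl⟩
  have decompM₂ : ∀ v ∈ M₂, ∃ (c : ℂ) (h : Hardy ℂ), v = c • mkPair g₂ 1 + rangeEmb T₂ h := by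
    intro v hv
    rw [hM₂] at hv
    obtain ⟨y, hy, z, hz, rfl⟩ := Submodule.mem_sup.mp hv
    obtain ⟨c, rfl⟩ := Submodule.mem_span_singleton.mp hy
    obtain ⟨h, rfl⟩ := hz
    exact ⟨c, h, rfl⟩
  set pg : M₁ := ⟨mkPair g₁ 1, memg₁⟩ with hpg
  set vb : HardyPair ℂ := ((U pg : M₂) : HardyPair ℂ) with hvbdef
  obtain ⟨a, f, hv⟩ := decompM₂ vb (U pg).2
  -- ⟨mkPair g₁ 1, 1⟩ is orthogonal to the range of (B₁ - λ₁) on M₁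
  have perp₁ : ∀ u ∈ M₁, ⟪BW σ₁ θ₁ u - lam₁ • u, mkPair g₁ 1⟫ = 0 := by
    intro u hu
    obtain ⟨c, h, rfl⟩ := decompM₁ u hu
    have hB := BW_decomp σ₁ θ₁ w₁ T₁ hT₁comm g₁ hg₁ c h
    rw [← hlam₁] at hB
    have e : BW σ₁ θ₁ (c • mkPair g₁ 1 + rangeEmb T₁ h)
        - lam₁ • (c • mkPair g₁ 1 + rangeEmb T₁ h)
        = rangeEmb T₁ ((c * σ₁ * (starRingEnd ℂ) w₁) • inclOp 1 + shiftOp h - lam₁ • h) := by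
      rw [hB, smul_add, smul_smul, mul_comm lam₁ c, map_sub, map_smul]
      abel
    rw [e, rangeEmb_eq, inner_mkPair, hK₁, inner_zero_left, add_zero]
  -- transfer orthogonality through U
  have perp₂ : ∀ u ∈ M₂, ⟪BW σ₂ θ₂ u - lam₁ • u, vb⟫ = 0 := by
    intro u hu
    set x : M₁ := U.symm ⟨u, hu⟩ with hx
    have hUx : ((U x : M₂) : HardyPair ℂ) = u := by rw [hx]; simp
    have hhu := hU (x : HardyPair ℂ) x.2
    set b : M₁ := ⟨BW σ₁ θ₁ (x : HardyPair ℂ), hinv₁ _ x.2⟩ with hb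
    have key : BW σ₂ θ₂ u - lam₁ • u = ((U (b - lam₁ • x) : M₂) : HardyPair ℂ) := by
      rw [map_sub, map_smul]
      push_cast [Submodule.coe_sub]
      rw [hUx]
      congr 1
      rw [hhu, show (⟨(x : HardyPair ℂ), x.2⟩ : M₁) = x from rfl, hUx]
    rw [key, hvbdef]
    have e1 := LinearIsometryEquiv.inner_map_map (𝕜 := ℂ) (E' := M₂) U (b - lam₁ • x) pg
    rw [← Submodule.coe_inner M₂ (U (b - lam₁ • x)) (U pg), e1,
      Submodule.coe_inner M₁ (b - lam₁ • x) pg]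
    have e2 : ((b - lam₁ • x : M₁) : HardyPair ℂ)
        = BW σ₁ θ₁ (x : HardyPair ℂ) - lam₁ • (x : HardyPair ℂ) := by
      push_cast [Submodule.coe_sub]
      rfl
    rw [e2]
    exact perp₁ _ x.2
  -- the inner-product expansion on M₂
  have hgT : ∀ ff : Hardy ℂ, ⟪g₂, T₂ ff⟫ = 0 := by
    intro ff
    rw [← inner_conj_symm, hK₂, map_zero]
  have expand : ∀ (C aa : ℂ) (k ff : Hardy ℂ),
      ⟪C • mkPair g₂ 1 + rangeEmb T₂ k, aa • mkPair g₂ 1 + rangeEmb T₂ ff⟫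
        = (starRingEnd ℂ) C * (aa * (⟪g₂, g₂⟫ + 1)) + ⟪k, ff⟫ := by
    intro C aa k ff
    simp only [inner_add_left, inner_add_right, inner_smul_left, inner_smul_right,
      rangeEmb_eq, inner_mkPair, hK₂, hgT, hTinner, inner_zero_left, inner_zero_right,
      RCLike.inner_apply, map_one, map_zero, zero_mul, one_mul, mul_one, add_zero, zero_add, mul_zero]
    ring
  -- the master relation
  have R : ∀ (c : ℂ) (h : Hardy ℂ),
      (starRingEnd ℂ) (c * (lam₂ - lam₁)) * (a * (⟪g₂, g₂⟫ + 1))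
        + ⟪(c * σ₂ * (starRingEnd ℂ) w₂) • inclOp 1 + shiftOp h - lam₁ • h, f⟫ = 0 := by
    intro c h
    have h0 := perp₂ _ (memM₂ c h)
    have hB := BW_decomp σ₂ θ₂ w₂ T₂ hT₂comm g₂ hg₂ c h
    rw [← hlam₂] at hB
    have e : BW σ₂ θ₂ (c • mkPair g₂ 1 + rangeEmb T₂ h)
        - lam₁ • (c • mkPair g₂ 1 + rangeEmb T₂ h)
        = (c * (lam₂ - lam₁)) • mkPair g₂ 1
          + rangeEmb T₂ ((c * σ₂ * (starRingEnd ℂ) w₂) • inclOp 1 + shiftOp h - lam₁ • h) := by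
      rw [hB, smul_add, smul_smul, mul_comm lam₁ c, map_sub, map_smul, mul_sub, sub_smul]
      abel
    rw [e, hv, expand] at h0
    exact h0
  -- the recursion forces f = 0
  have hrec : ∀ n : ℕ, f (n + 1) = (starRingEnd ℂ) lam₁ * f n := by
    intro n
    have h0 := R 0 (lp.single 2 n 1)
    rw [show (0:ℂ) * σ₂ * (starRingEnd ℂ) w₂ = 0 by ring, zero_smul, zero_add,
      shiftOp_single, inner_sub_left, inner_smul_left, lp.inner_single_left,
      lp.inner_single_left] at h0
    simp only [zero_mul, map_zero, RCLike.inner_apply, map_one, one_mul, zero_add] at h0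
    linear_combination h0
  have hf : f = 0 := eventually_zero f lam₁ hlam₁norm hrec
  -- the c = 1, h = 0 relation
  have hR10 : (starRingEnd ℂ) (lam₂ - lam₁) * (a * (⟪g₂, g₂⟫ + 1)) = 0 := by
    have h0 := R 1 0
    rw [hf] at h0
    simpa [shiftOp_zero] using h0
  have hgnezero : (⟪g₂, g₂⟫ + 1 : ℂ) ≠ 0 := by
    rw [inner_self_eq_norm_sq_to_K]
    have h1 : ((‖g₂‖ ^ 2 + 1 : ℝ) : ℂ) ≠ 0 := by
      exact_mod_cast ne_of_gt (by positivity : (0:ℝ) < ‖g₂‖ ^ 2 + 1)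
    intro hcon
    apply h1
    push_cast
    exact hcon
  have hnormvb : ‖vb‖ = ‖mkPair g₁ 1‖ := by
    rw [hvbdef, Submodule.norm_coe, U.norm_map]
    rfl
  have hnormP₁pos : (0:ℝ) < ‖mkPair g₁ 1‖ := by
    have h2 := norm_mkPair_sq g₁ 1
    nlinarith [norm_nonneg (mkPair g₁ 1), norm_nonneg g₁, norm_one (α := ℂ)]
  have hlam : lam₁ = lam₂ := by
    by_contra hne12
    have hsub : (starRingEnd ℂ) (lam₂ - lam₁) ≠ 0 := by
      rw [map_ne_zero]
      exact sub_ne_zero.mpr fun hcon => hne12 hcon.symm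
    have ha : a = 0 := by
      rcases mul_eq_zero.mp hR10 with h | h
      · exact absurd h hsub
      · rcases mul_eq_zero.mp h with h' | h'
        · exact h'
        · exact absurd h' hgnezero
    have hvb0 : vb = 0 := by
      rw [hv, ha, hf, zero_smul, map_zero, add_zero]
    rw [hvb0, norm_zero] at hnormvb
    exact absurd hnormvb.symm (ne_of_gt hnormP₁pos)
  have hθeq : θ₁ = θ₂ := by
    have h := hlam
    rw [hlam₁, hlam₂] at h
    obtain ⟨n, hn⟩ := Complex.exp_eq_exp_iff_exists_int.mp h
    have hI : (I : ℂ) ≠ 0 := I_ne_zero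
    have hC : (θ₁ : ℂ) = (θ₂ : ℂ) + (n : ℂ) * (2 * (Real.pi : ℂ)) :=
      mul_right_cancel₀ hI (by linear_combination hn)
    have hre : θ₁ = θ₂ + (n : ℝ) * (2 * Real.pi) := by exact_mod_cast hC
    have hπ := Real.pi_pos
    obtain ⟨h1, h2⟩ := hθ₁
    obtain ⟨h3, h4⟩ := hθ₂
    have hn0 : n = 0 := by
      have hlt : (n : ℝ) < 1 := by nlinarith
      have hgt : (-1 : ℝ) < (n : ℝ) := by nlinarith
      exact_mod_cast (by omega : ∀ m : ℤ, (-1 : ℤ) < m → m < 1 → m = 0) n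
        (by exact_mod_cast hgt) (by exact_mod_cast hlt)
    rw [hn0] at hre
    simpa using hre
  -- the sigma identity
  have hBP₁ : BW σ₁ θ₁ (mkPair g₁ 1)
      = lam₁ • mkPair g₁ 1 + rangeEmb T₁ (((σ₁ : ℂ) * (starRingEnd ℂ) w₁) • inclOp 1) := by
    have hB := BW_decomp σ₁ θ₁ w₁ T₁ hT₁comm g₁ hg₁ 1 0
    rw [← hlam₁] at hB
    simpa [shiftOp_zero] using hB
  have hq₁mem : rangeEmb T₁ (((σ₁ : ℂ) * (starRingEnd ℂ) w₁) • inclOp 1) ∈ M₁ := by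
    rw [hM₁]; exact Submodule.mem_sup_right (LinearMap.mem_range_self _ _)
  set q : M₁ := ⟨rangeEmb T₁ (((σ₁ : ℂ) * (starRingEnd ℂ) w₁) • inclOp 1), hq₁mem⟩ with hq
  have split : (⟨BW σ₁ θ₁ (mkPair g₁ 1), hinv₁ _ memg₁⟩ : M₁) = lam₁ • pg + q := by
    apply Subtype.ext
    push_cast [hBP₁]
    rfl
  have hU0 := hU (mkPair g₁ 1) memg₁
  rw [split, map_add, map_smul] at hU0
  have hBvb : BW σ₂ θ₂ vb
      = lam₁ • vb + a • rangeEmb T₂ (((σ₂ : ℂ) * (starRingEnd ℂ) w₂) • inclOp 1) := by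
    have hB := BW_decomp σ₂ θ₂ w₂ T₂ hT₂comm g₂ hg₂ a 0
    rw [← hlam₂] at hB
    have hvb2 : vb = a • mkPair g₂ 1 + rangeEmb T₂ 0 := by rw [hv, hf]
    have e2 : rangeEmb T₂ ((a * ↑σ₂ * (starRingEnd ℂ) w₂) • inclOp 1 + shiftOp 0)
        = a • rangeEmb T₂ (((σ₂ : ℂ) * (starRingEnd ℂ) w₂) • inclOp 1) := by
      rw [shiftOp_zero, add_zero, ← map_smul, smul_smul, mul_assoc]
    rw [hvb2, hB, map_zero, add_zero, e2, smul_smul, ← hlam, mul_comm a lam₁]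
  have hUq : ((U q : M₂) : HardyPair ℂ)
      = a • rangeEmb T₂ (((σ₂ : ℂ) * (starRingEnd ℂ) w₂) • inclOp 1) := by
    have hc : ((lam₁ • U pg + U q : M₂) : HardyPair ℂ)
        = lam₁ • vb + ((U q : M₂) : HardyPair ℂ) := by
      rw [Submodule.coe_add, SetLike.val_smul, hvbdef]
    rw [hc] at hU0
    rw [hBvb] at hU0
    exact add_left_cancel hU0
  -- norms
  have hnormRange : ∀ (T : Hardy ℂ →L[ℂ] Hardy ℂ) (hT : ∀ h : Hardy ℂ, ‖T h‖ = ‖h‖)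
      (k : Hardy ℂ), ‖rangeEmb T k‖ = ‖k‖ := by
    intro T hT k
    have h2 : ‖rangeEmb T k‖ ^ 2 = ‖T k‖ ^ 2 := by
      rw [rangeEmb_eq]
      have := norm_mkPair_sq (T k) (0 : ℂ)
      simpa using this
    rw [hT] at h2
    rw [← Real.sqrt_sq (norm_nonneg (rangeEmb T k)), h2, Real.sqrt_sq (norm_nonneg k)]
  have hnq : ‖((U q : M₂) : HardyPair ℂ)‖ = σ₁ := by
    rw [Submodule.norm_coe, U.norm_map, hq]
    show ‖rangeEmb T₁ _‖ = σ₁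
    rw [hnormRange T₁ hT₁iso, norm_smul, norm_inclOp_one, mul_one, norm_mul,
      Complex.norm_real, RCLike.norm_conj, hw₁, mul_one, Real.norm_eq_abs,
      abs_of_pos hσ₁]
  have hnq2 : ‖a • rangeEmb T₂ (((σ₂ : ℂ) * (starRingEnd ℂ) w₂) • inclOp 1)‖ = ‖a‖ * σ₂ := by
    rw [norm_smul, hnormRange T₂ hT₂iso, norm_smul, norm_inclOp_one, mul_one, norm_mul,
      Complex.norm_real, RCLike.norm_conj, hw₂, mul_one, Real.norm_eq_abs,
      abs_of_pos hσ₂]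
  have hsigma : σ₁ = ‖a‖ * σ₂ := by rw [← hnq, hUq, hnq2]
  have hA : ‖a‖ ^ 2 * (‖g₂‖ ^ 2 + 1) = ‖g₁‖ ^ 2 + 1 := by
    have h1 : ‖vb‖ = ‖a‖ * ‖mkPair g₂ 1‖ := by
      rw [hv, hf, map_zero, add_zero, norm_smul]
    have h2 := norm_mkPair_sq g₂ 1
    have h3 := norm_mkPair_sq g₁ 1
    have h4 : ‖vb‖ ^ 2 = ‖mkPair g₁ 1‖ ^ 2 := by rw [hnormvb]
    rw [h1] at h4
    rw [mul_pow] at h4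
    rw [h2, h3] at h4
    simpa [norm_one] using h4
  refine ⟨hθeq, ?_⟩
  rw [hsigma]
  nlinarith [hA, norm_nonneg a, sq_nonneg σ₂]

end AuxMain
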